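/- For every perfect matching M of a graph G, the forcing number f(G,M) is at most the anti-forcing number af(G,M). -/
import Mathlib


open SimpleGraph

variable {V : Type*}

/-- A closed walk is an `M`-alternating cycle: it is a cycle and its edges alternate
(cyclically) between `M` and the complement of `M`. -/
def SimpleGraph.IsAltCycle (G : SimpleGraph V) (M : Set (Sym2 V)) {v : V} (c : G.Walk v v) :
    Prop :=
  c.IsCycle ∧ List.Chain' (fun e f => (e ∈ M ↔ f ∉ M)) c.edges ∧
    ∀ e f, c.edges.head? = some e → c.edges.getLast? = some f → (f ∈ M ↔ e ∉ M)

/-- `S` is a forcing set of the perfect matching `M`: `S ⊆ M` and `M` is the unique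
perfect matching of `G` containing `S`. -/
def SimpleGraph.IsForcingSet (G : SimpleGraph V) (M : G.Subgraph) (S : Set (Sym2 V)) : Prop :=
  S ⊆ M.edgeSet ∧ ∀ N : G.Subgraph, N.IsPerfectMatching → S ⊆ N.edgeSet → N = M

/-- `S` is an anti-forcing set of the perfect matching `M`: `S` consists of edges of `G`
not in `M`, and `M` is the unique perfect matching of `G - S` (equivalently, the unique
perfect matching of `G` whose edge set avoids `S`). -/
def SimpleGraph.IsAntiForcingSet (G : SimpleGraph V) (M : G.Subgraph) (S : Set (Sym2 V)) :
    Prop :=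
  S ⊆ G.edgeSet \ M.edgeSet ∧
    ∀ N : G.Subgraph, N.IsPerfectMatching → Disjoint N.edgeSet S → N = M

/-- The forcing number `f(G,M)`. -/
noncomputable def SimpleGraph.forcingNum (G : SimpleGraph V) (M : G.Subgraph) : ℕ :=
  sInf {n | ∃ S : Set (Sym2 V), G.IsForcingSet M S ∧ S.ncard = n}

/-- The anti-forcing number `af(G,M)`. -/
noncomputable def SimpleGraph.antiForcingNum (G : SimpleGraph V) (M : G.Subgraph) : ℕ :=
  sInf {n | ∃ S : Set (Sym2 V), G.IsAntiForcingSet M S ∧ S.ncard = n}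

/-- Two perfect matchings with nested edge sets are equal. -/
lemma pm_eq_of_edgeSet_subset {G : SimpleGraph V} {M N : G.Subgraph}
    (hM : M.IsPerfectMatching) (hN : N.IsPerfectMatching)
    (h : N.edgeSet ⊆ M.edgeSet) : N = M := by
  ext v w
  · simp [hM.2 v, hN.2 v]
  · constructor
    · intro hvw
      have : s(v, w) ∈ M.edgeSet := h (by rwa [SimpleGraph.Subgraph.mem_edgeSet])
      rwa [SimpleGraph.Subgraph.mem_edgeSet] at this
    · intro hvw
      obtain ⟨w', hw', _⟩ := hN.1 (hN.2 v)
      have : s(v, w') ∈ M.edgeSet := h (by rwa [SimpleGraph.Subgraph.mem_edgeSet])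
      rw [SimpleGraph.Subgraph.mem_edgeSet] at this
      obtain ⟨u, _, hu⟩ := hM.1 (hM.2 v)
      have hww : w' = w := (hu w' this).trans (hu w hvw).symm
      exact hww ▸ hw'

/-- For every perfect matching `M` of `G`, the forcing number is at most the
anti-forcing number. -/
theorem forcing_le_antiforcing (G : SimpleGraph V) [Fintype V]
    (M : G.Subgraph) (hM : M.IsPerfectMatching) :
    G.forcingNum M ≤ G.antiForcingNum M := by
  classical
  set A : Set ℕ := {n | ∃ S : Set (Sym2 V), G.IsAntiForcingSet M S ∧ S.ncard = n} with hA
  have hAne : A.Nonempty := by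
    refine ⟨(G.edgeSet \ M.edgeSet).ncard, G.edgeSet \ M.edgeSet, ⟨Set.Subset.rfl, ?_⟩, rfl⟩
    intro N hN hdisj
    refine pm_eq_of_edgeSet_subset hM hN fun e he => ?_
    have heG : e ∈ G.edgeSet := N.edgeSet_subset he
    by_contra heM
    exact (Set.disjoint_left.mp hdisj he) ⟨heG, heM⟩
  obtain ⟨S, hS, hcard⟩ := Nat.sInf_mem hAne
  -- the map sending each edge to an `M`-edge sharing a vertex with it
  set φ : Sym2 V → Sym2 V :=
    fun e => s(e.out.1, (hM.1 (hM.2 e.out.1)).choose) with hφ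
  have hφM : ∀ e, φ e ∈ M.edgeSet := fun e =>
    (hM.1 (hM.2 e.out.1)).choose_spec.1
  have hforce : G.IsForcingSet M (φ '' S) := by
    constructor
    · rintro _ ⟨e, _, rfl⟩; exact hφM e
    · intro N hN hsub
      refine hS.2 N hN (Set.disjoint_left.mpr fun e heN heS => ?_)
      have heGM := hS.1 heS
      -- write e = s(a, b) with a = e.out.1
      have ha : e.out.1 ∈ e := Sym2.out_fst_mem e
      set b := Sym2.Mem.other ha with hb
      have hespec : s(e.out.1, b) = e := Sym2.other_spec ha
      have heab : N.Adj e.out.1 b := by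
        rw [← SimpleGraph.Subgraph.mem_edgeSet, hespec]; exact heN
      have hφN : φ e ∈ N.edgeSet := hsub ⟨e, heS, rfl⟩
      have hφadj : N.Adj e.out.1 (hM.1 (hM.2 e.out.1)).choose := by
        rwa [← SimpleGraph.Subgraph.mem_edgeSet]
      obtain ⟨u, _, hu⟩ := hN.1 (hN.2 e.out.1)
      have heq : b = (hM.1 (hM.2 e.out.1)).choose :=
        (hu _ heab).trans (hu _ hφadj).symm
      have hMe : e ∈ M.edgeSet := by
        have h1 := (hM.1 (hM.2 e.out.1)).choose_spec.1
        rw [← heq] at h1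
        rw [← hespec, SimpleGraph.Subgraph.mem_edgeSet]
        exact h1
      exact heGM.2 hMe
  calc G.forcingNum M ≤ (φ '' S).ncard :=
        Nat.sInf_le ⟨φ '' S, hforce, rfl⟩
    _ ≤ S.ncard := Set.ncard_image_le S.toFinite
    _ = G.antiForcingNum M := hcard
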